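/- Let φ_β(x) = (ħ/√(m|β|))·sgn(x)·e^{−(ħ²/(m|β|))|x|} and ψ(x) = (2πħ)^(−1/4)σ^(−1/2)e^{−(σ̆/(4ħσ))(x−q)² + i(p/ħ)(x−q)} with Re σ, Re σ̆ > 0, Re(σ̄σ̆) = 1, q ≠ 0. Then |∫_ℝ φ_β(x)ψ(x)dx| ≤ (8πħ⁵/(m²β²|σ̆|²))^{1/4} exp(−p²/(ħ|σ̆|²) − (ħ²/(m|β|))(|q| + 2sgn(qp)|p|Im(σ̆σ̄)/|σ̆|²) + ħ⁵/(m²β²|σ̆|²)) + (128πħ⁵|σ|²/(m²β²))^{1/4} exp(−q²/(4ħ|σ|²) + ħ⁵|σ|²/(m²β²)). -/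

import Mathlib

open MeasureTheory

/-- The bound-state eigenfunction `φ_β` of the δ'-interaction Hamiltonian (β < 0). -/
noncomputable def phiB (hbar m β : ℝ) (x : ℝ) : ℝ :=
  (hbar / Real.sqrt (m * |β|)) * Real.sign x * Real.exp (-(hbar ^ 2 / (m * |β|)) * |x|)

/-- The Gaussian coherent state `ψ^ħ(σ, σ̆, q, p; x)`. -/
noncomputable def cohSt (hbar : ℝ) (s sb : ℂ) (q p : ℝ) (x : ℝ) : ℂ :=
  (((2 * Real.pi * hbar) ^ ((1 : ℝ) / 4) : ℝ) : ℂ)⁻¹ * (s ^ ((1 : ℂ) / 2))⁻¹ *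
    Complex.exp (-(sb / (4 * (hbar : ℂ) * s)) * ((x : ℂ) - (q : ℂ)) ^ 2
      + Complex.I * ((p : ℂ) / (hbar : ℂ)) * ((x : ℂ) - (q : ℂ)))

lemma aux_integrable_exp_quad {a : ℝ} (ha : 0 < a) (t : ℝ) :
    Integrable (fun x : ℝ => Real.exp (-a * x ^ 2 + t * x)) := by
  have h := (integrable_cexp_quadratic (b := (a : ℂ)) (by simpa using ha) (t : ℂ) 0).norm
  refine h.congr (Filter.Eventually.of_forall fun x => ?_)
  have : (-(a:ℂ) * x ^ 2 + t * x + 0 : ℂ) = ((-a * x^2 + t*x : ℝ) : ℂ) := by push_cast; ring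
  simp only [this, Complex.norm_exp, Complex.ofReal_re]

lemma aux_integral_exp_quad {a : ℝ} (ha : 0 < a) (t : ℝ) :
    ∫ x : ℝ, Real.exp (-a * x ^ 2 + t * x) = (Real.pi / a) ^ ((1:ℝ)/2) * Real.exp (t ^ 2 / (4 * a)) := by
  have h := integral_cexp_quadratic (b := (-a : ℂ)) (by simpa using ha) (t : ℂ) 0
  have h1 : (∫ x : ℝ, Complex.exp ((-a : ℂ) * (x:ℂ) ^ 2 + (t:ℂ) * (x:ℂ) + 0))
      = ((∫ x : ℝ, Real.exp (-a * x ^ 2 + t * x) : ℝ) : ℂ) := by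
    have h2 : (∫ x : ℝ, Complex.exp ((-a : ℂ) * (x:ℂ) ^ 2 + (t:ℂ) * (x:ℂ) + 0))
        = ∫ x : ℝ, ((Real.exp (-a * x ^ 2 + t * x) : ℝ) : ℂ) := by
      congr 1; funext x
      have : (-(a:ℂ) * x ^ 2 + t * x + 0 : ℂ) = ((-a * x^2 + t*x : ℝ) : ℂ) := by push_cast; ring
      rw [this, Complex.ofReal_exp]
    rw [h2]
    exact integral_ofReal
  rw [h1] at h
  have h2 : ((Real.pi : ℂ) / -(-a : ℂ)) ^ ((1:ℂ)/2) = (((Real.pi / a) ^ ((1:ℝ)/2) : ℝ) : ℂ) := by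
    rw [Complex.ofReal_cpow (by positivity)]
    push_cast
    ring_nf
  have h3 : Complex.exp (0 - (t:ℂ) ^ 2 / (4 * (-a : ℂ))) = ((Real.exp (t^2/(4*a)) : ℝ) : ℂ) := by
    rw [Complex.ofReal_exp]
    congr 1
    push_cast
    field_simp
    ring
  rw [h2, h3, ← Complex.ofReal_mul] at h
  exact_mod_cast h

lemma aux_measurable_sign : Measurable Real.sign := by
  have : Real.sign = fun r : ℝ => if r < 0 then (-1:ℝ) else if 0 < r then 1 else 0 := by
    funext r; rfl
  rw [this]
  exact Measurable.ite (measurableSet_lt measurable_id measurable_const) measurable_const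
    (Measurable.ite (measurableSet_lt measurable_const measurable_id) measurable_const
      measurable_const)

lemma aux_eq_of_pow4 {x y : ℝ} (hx : 0 ≤ x) (hy : 0 ≤ y) (h : x ^ 4 = y ^ 4) : x = y := by
  have h1 : x = (x ^ 4) ^ ((1:ℝ)/4) := by
    rw [← Real.rpow_natCast x 4, ← Real.rpow_mul hx]; norm_num
  rw [h1, h, ← Real.rpow_natCast y 4, ← Real.rpow_mul hy]; norm_num

lemma aux_rpow4 {x : ℝ} (hx : 0 ≤ x) : (x ^ ((1:ℝ)/4)) ^ 4 = x := by
  rw [← Real.rpow_natCast (x ^ ((1:ℝ)/4)) 4, ← Real.rpow_mul hx]; norm_num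

lemma aux_rpow2 {x : ℝ} (hx : 0 ≤ x) : (x ^ ((1:ℝ)/2)) ^ 2 = x := by
  rw [← Real.rpow_natCast (x ^ ((1:ℝ)/2)) 2, ← Real.rpow_mul hx]; norm_num


lemma auxBre (hbar : ℝ) (hh : 0 < hbar) (s sb : ℂ) (hs0 : s ≠ 0)
    (hnorm' : s.re * sb.re + s.im * sb.im = 1) :
    (sb / (4 * (hbar:ℂ) * s)).re = 1 / (4 * hbar * ‖s‖ ^ 2) := by
  have hns : Complex.normSq s ≠ 0 := (Complex.normSq_pos.mpr hs0).ne'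
  rw [Complex.div_re]
  simp only [Complex.mul_re, Complex.mul_im, Complex.ofReal_re, Complex.ofReal_im,
    Complex.normSq_mul, ← Complex.sq_norm]
  norm_num
  rw [abs_of_pos hh, mul_pow, mul_pow, Complex.sq_norm]
  field_simp
  linear_combination hnorm'

lemma auxEre (hbar : ℝ) (hh : hbar ≠ 0) (s sb : ℂ) (q p x : ℝ) :
    (-(sb / (4 * (hbar : ℂ) * s)) * ((x : ℂ) - (q : ℂ)) ^ 2
      + Complex.I * ((p : ℂ) / (hbar : ℂ)) * ((x : ℂ) - (q : ℂ))).re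
    = -(sb / (4 * (hbar:ℂ) * s)).re * (x - q) ^ 2 := by
  have h : (-(sb / (4 * (hbar : ℂ) * s)) * ((x : ℂ) - (q : ℂ)) ^ 2
      + Complex.I * ((p : ℂ) / (hbar : ℂ)) * ((x : ℂ) - (q : ℂ)))
      = -(sb / (4 * (hbar:ℂ) * s)) * (((x - q)^2 : ℝ) : ℂ)
        + Complex.I * ((p/hbar*(x-q) : ℝ) : ℂ) := by
    push_cast
    ring
  rw [h]
  simp only [Complex.add_re, Complex.neg_re, Complex.mul_re, Complex.I_re, Complex.I_im,
    Complex.ofReal_re, Complex.ofReal_im]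
  ring

lemma auxGexp (B w d : ℂ) (q : ℂ) (hB : B ≠ 0) :
    (-B*q^2 - d) - (2*B*q + w)^2/(4*(-B)) = q*w - d + w^2/(4*B) := by
  field_simp
  ring

lemma auxBinv (hbar : ℝ) (hh : (hbar:ℂ) ≠ 0) (s sb : ℂ) (hs0 : s ≠ 0) (hsb0 : sb ≠ 0)
    (w : ℂ) : w^2/(4*(sb/(4*(hbar:ℂ)*s))) = w^2 * ((hbar:ℂ) * s) / sb := by
  rw [div_eq_div_iff]
  · field_simp
  · intro h
    rcases mul_eq_zero.mp h with h | h
    · norm_num at h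
    · exact (div_eq_zero_iff.mp h).elim hsb0 (by
        intro h2
        rcases mul_eq_zero.mp h2 with h3 | h3
        · rcases mul_eq_zero.mp h3 with h4 | h4
          · norm_num at h4
          · exact hh h4
        · exact hs0 h3)
  · exact hsb0

lemma auxWre' (w : ℂ) (hbar : ℝ) (s sb : ℂ) (hsb0 : sb ≠ 0) :
    (w^2 * ((hbar:ℂ)*s)/sb).re
    = ((w.re^2 - w.im^2) * hbar * (s.re*sb.re+s.im*sb.im)
        - 2*w.re*w.im*hbar*(s.im*sb.re - s.re*sb.im)) / Complex.normSq sb := by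
  have hns : Complex.normSq sb ≠ 0 := (Complex.normSq_pos.mpr hsb0).ne'
  simp only [Complex.div_re, Complex.mul_re, Complex.mul_im, Complex.ofReal_re,
    Complex.ofReal_im, pow_two]
  field_simp
  ring

lemma auxWreim (hbar c ε p : ℝ) (hh : hbar ≠ 0) :
    (Complex.I*((p:ℂ)/(hbar:ℂ)) - ((c*ε : ℝ):ℂ)).re = -(c*ε)
    ∧ (Complex.I*((p:ℂ)/(hbar:ℂ)) - ((c*ε : ℝ):ℂ)).im = p/hbar := by
  constructor
  · simp [Complex.div_re, Complex.div_im, Complex.normSq_apply, pow_two]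
  · simp [Complex.div_re, Complex.div_im, Complex.normSq_apply, pow_two]
    field_simp

lemma aux_rpow24 {x : ℝ} (hx : 0 ≤ x) : (x ^ ((1:ℝ)/2)) ^ 4 = x ^ 2 := by
  have h : (x ^ ((1:ℝ)/2)) ^ 4 = ((x ^ ((1:ℝ)/2))^2)^2 := by ring
  rw [h, aux_rpow2 hx]

lemma aux_h5a (hbar m β asb : ℝ) (hm : m ≠ 0) (hβ : β ≠ 0) (hasb : asb ≠ 0) :
    hbar ^ 5 / (m^2*β^2*asb^2) = hbar * (hbar^4/(m^2*β^2)) / asb^2 := by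
  field_simp

lemma aux_h5b (hbar m β as : ℝ) (hm : m ≠ 0) (hβ : β ≠ 0) :
    hbar ^ 5 * as^2 / (m^2*β^2) = hbar * as^2 * (hbar^4/(m^2*β^2)) := by
  field_simp

lemma aux_coef1_id (hbar m β as asb : ℝ) (hh : 0 < hbar) (hm : m ≠ 0) (hβ : β ≠ 0)
    (hs : 0 < as) (hsb : 0 < asb) :
    hbar^4/(m^2*β^2) * ((2*Real.pi*hbar)⁻¹ * (as^2)⁻¹) * (Real.pi/(asb/(4*hbar*as)))^2
    = 8 * Real.pi * hbar ^ 5 / (m ^ 2 * β ^ 2 * asb ^ 2) := by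
  have hpi := Real.pi_pos
  field_simp
  ring

lemma aux_coef2_id (hbar m β as : ℝ) (hh : 0 < hbar) (hm : m ≠ 0) (hβ : β ≠ 0)
    (hs : 0 < as) :
    hbar^4/(m^2*β^2) * ((2*Real.pi*hbar)⁻¹ * (as^2)⁻¹) * (16 * (Real.pi/(1/(4*hbar*as^2)))^2)
    = 128 * Real.pi * hbar ^ 5 * as ^ 2 / (m ^ 2 * β ^ 2) := by
  have hpi := Real.pi_pos
  field_simp
  ring

lemma aux_exp1_id (c ε p hbar aq asb u1 u2 u3 u4 : ℝ) (hh : hbar ≠ 0) (hasb : asb ≠ 0) :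
    -(c*aq) + ((c^2 - (p/hbar)^2) * hbar * 1 - 2*(-(c*ε))*(p/hbar)*hbar*(u2*u3 - u1*u4)) / asb^2
    = -(p^2)/(hbar*asb^2) - c*(aq + 2*(ε*p)*(u4*u1 - u3*u2)/asb^2) + hbar*c^2/asb^2 := by
  field_simp
  ring

lemma aux_exp2_id (c q hbar as : ℝ) (hh : hbar ≠ 0) (has : as ≠ 0) :
    -(1/(4*hbar*as^2))*q^2 + c^2/(4*(1/(4*hbar*as^2)))
    = -(q^2)/(4*hbar*as^2) + hbar*as^2*c^2 := by
  field_simp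

set_option maxHeartbeats 8000000 in
theorem stmt17 (hbar m β : ℝ) (hh : 0 < hbar) (hm : 0 < m) (hβ : β < 0)
    (s sb : ℂ) (hs : 0 < s.re) (hsb : 0 < sb.re)
    (hnorm : ((starRingEnd ℂ) s * sb).re = 1) (q p : ℝ) (hq : q ≠ 0) :
    ‖∫ x : ℝ, (phiB hbar m β x : ℂ) * cohSt hbar s sb q p x‖
      ≤ (8 * Real.pi * hbar ^ 5 / (m ^ 2 * β ^ 2 * ‖sb‖ ^ 2)) ^ ((1 : ℝ) / 4)
          * Real.exp (-(p ^ 2) / (hbar * ‖sb‖ ^ 2)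
              - (hbar ^ 2 / (m * |β|))
                * (|q| + 2 * Real.sign (q * p) * |p| * (sb * (starRingEnd ℂ) s).im
                    / ‖sb‖ ^ 2)
              + hbar ^ 5 / (m ^ 2 * β ^ 2 * ‖sb‖ ^ 2))
        + (128 * Real.pi * hbar ^ 5 * ‖s‖ ^ 2 / (m ^ 2 * β ^ 2)) ^ ((1 : ℝ) / 4)
          * Real.exp (-(q ^ 2) / (4 * hbar * ‖s‖ ^ 2)
              + hbar ^ 5 * ‖s‖ ^ 2 / (m ^ 2 * β ^ 2)) := by
  have hβ0 : (0:ℝ) < |β| := abs_pos.mpr hβ.ne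
  have hs0 : s ≠ 0 := fun h => by simp [h] at hs
  have hsb0 : sb ≠ 0 := fun h => by simp [h] at hsb
  have hh0 : (hbar : ℂ) ≠ 0 := by exact_mod_cast hh.ne'
  have hnorm' : s.re * sb.re + s.im * sb.im = 1 := by
    simpa [Complex.mul_re] using hnorm
  set c : ℝ := hbar ^ 2 / (m * |β|) with hc_def
  have hc : 0 < c := by positivity
  set A : ℝ := hbar / Real.sqrt (m * |β|) with hA_def
  have hA : 0 < A := by positivity
  have hA2 : A ^ 2 = c := by
    rw [hA_def, div_pow, Real.sq_sqrt (by positivity)]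
  have hc2 : c ^ 2 = hbar ^ 4 / (m ^ 2 * β ^ 2) := by
    rw [hc_def, div_pow, mul_pow, _root_.sq_abs]
    ring
  set ε : ℝ := Real.sign q with hε_def
  have hε : ε = 1 ∨ ε = -1 := by
    rcases hq.lt_or_gt with h | h
    · exact Or.inr (Real.sign_of_neg h)
    · exact Or.inl (Real.sign_of_pos h)
  have hε2 : ε ^ 2 = 1 := by rcases hε with h | h <;> rw [h] <;> norm_num
  have hεq : ε * q = |q| := by
    rcases hq.lt_or_gt with h | h
    · rw [hε_def, Real.sign_of_neg h, abs_of_neg h]; ring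
    · rw [hε_def, Real.sign_of_pos h, abs_of_pos h]; ring
  have hqe : q = ε * |q| := by
    rcases hε with h | h <;> rw [← hεq, h] <;> ring
  have hsgnp : Real.sign (q * p) * |p| = ε * p := by
    rcases lt_trichotomy p 0 with hp | hp | hp
    · rcases hq.lt_or_gt with h | h
      · rw [Real.sign_of_pos (mul_pos_of_neg_of_neg h hp), hε_def, Real.sign_of_neg h,
          abs_of_neg hp]; try ring
      · rw [Real.sign_of_neg (mul_neg_of_pos_of_neg h hp), hε_def, Real.sign_of_pos h,
          abs_of_neg hp]; try ring
    · simp [hp]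
    · rcases hq.lt_or_gt with h | h
      · rw [Real.sign_of_neg (mul_neg_of_neg_of_pos h hp), hε_def, Real.sign_of_neg h,
          abs_of_pos hp]; try ring
      · rw [Real.sign_of_pos (mul_pos h hp), hε_def, Real.sign_of_pos h, abs_of_pos hp]
        try ring
  have hnsq : Complex.normSq s = ‖s‖ ^ 2 := (Complex.sq_norm s).symm
  have hnsqb : Complex.normSq sb = ‖sb‖ ^ 2 := (Complex.sq_norm sb).symm
  have habss : 0 < ‖s‖ := norm_pos_iff.mpr hs0
  have habssb : 0 < ‖sb‖ := norm_pos_iff.mpr hsb0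
  set B : ℂ := sb / (4 * (hbar:ℂ) * s) with hB_def
  have hBre : B.re = 1 / (4 * hbar * ‖s‖ ^ 2) := auxBre hbar hh s sb hs0 hnorm'
  have hBpos : 0 < B.re := by rw [hBre]; positivity
  have hB0 : B ≠ 0 := fun h => by rw [h] at hBpos; simp at hBpos
  have hBabs : ‖B‖ = ‖sb‖ / (4 * hbar * ‖s‖) := by
    rw [hB_def, norm_div, norm_mul, norm_mul, Complex.norm_real, Real.norm_eq_abs, abs_of_pos hh]
    norm_num
  set E : ℝ → ℂ := fun x => -B * ((x : ℂ) - (q : ℂ)) ^ 2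
      + Complex.I * ((p : ℂ) / (hbar : ℂ)) * ((x : ℂ) - (q : ℂ)) with hE_def
  have hEre : ∀ x : ℝ, (E x).re = -B.re * (x - q) ^ 2 := fun x => auxEre hbar hh.ne' s sb q p x
  set N : ℂ := (((2 * Real.pi * hbar) ^ ((1 : ℝ) / 4) : ℝ) : ℂ)⁻¹ * (s ^ ((1 : ℂ) / 2))⁻¹
    with hN_def
  set F : ℝ → ℂ := fun x => ((Real.sign x * Real.exp (-c * |x|) : ℝ) : ℂ) * Complex.exp (E x)
    with hF_def
  set G : ℝ → ℂ := fun x => ((ε * Real.exp (-(c * ε) * x) : ℝ) : ℂ) * Complex.exp (E x)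
    with hG_def
  -- rewrite the main integral
  have key : (∫ x : ℝ, (phiB hbar m β x : ℂ) * cohSt hbar s sb q p x)
      = (A : ℂ) * N * ∫ x : ℝ, F x := by
    rw [← MeasureTheory.integral_const_mul]
    congr 1; funext x
    simp only [phiB, cohSt, hF_def, hE_def, hN_def, hB_def, hA_def, hc_def]
    push_cast
    ring
  -- integrability
  have harg0 : ∀ x : ℝ, -B*(x:ℂ)^2 + (2*B*(q:ℂ) + Complex.I*((p:ℂ)/(hbar:ℂ)))*(x:ℂ)
      + (-B*(q:ℂ)^2 - Complex.I*((p:ℂ)/(hbar:ℂ))*(q:ℂ)) = E x := by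
    intro x
    simp only [hE_def]
    ring
  have hψint : Integrable (fun x : ℝ => Complex.exp (E x)) := by
    have h := integrable_cexp_quadratic (b := B) hBpos
      (2*B*(q:ℂ) + Complex.I*((p:ℂ)/(hbar:ℂ))) (-B*(q:ℂ)^2 - Complex.I*((p:ℂ)/(hbar:ℂ))*(q:ℂ))
    exact h.congr (Filter.Eventually.of_forall fun x => congrArg Complex.exp (harg0 x))
  have habs_exp : ∀ x : ℝ, ‖Complex.exp (E x)‖ = Real.exp (-B.re * (x - q)^2) := by
    intro x
    rw [Complex.norm_exp, hEre x]
  have hsign_le : ∀ x : ℝ, |Real.sign x| ≤ 1 := by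
    intro x
    rcases Real.sign_apply_eq x with h | h | h <;> rw [h] <;> norm_num
  have hFmeas : AEStronglyMeasurable F volume := by
    apply Measurable.aestronglyMeasurable
    apply Measurable.mul
    · exact Complex.measurable_ofReal.comp (aux_measurable_sign.mul
        (Real.continuous_exp.comp (continuous_const.mul _root_.continuous_abs)).measurable)
    · apply Continuous.measurable
      refine Complex.continuous_exp.comp ?_
      rw [hE_def]
      apply Continuous.add
      · exact (continuous_const.mul (((Complex.continuous_ofReal.sub continuous_const).pow 2)))
      · exact continuous_const.mul (Complex.continuous_ofReal.sub continuous_const)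
  have hFint : Integrable F := by
    refine hψint.mono hFmeas (Filter.Eventually.of_forall fun x => ?_)
    rw [hF_def]
    simp only [norm_mul, Complex.norm_real, Real.norm_eq_abs, ← abs_mul]
    have h1 : |Real.sign x * Real.exp (-c * |x|)| ≤ 1 := by
      rw [abs_mul, abs_of_pos (Real.exp_pos _)]
      calc |Real.sign x| * Real.exp (-c * |x|) ≤ 1 * 1 := by
            apply mul_le_mul (hsign_le x) _ (Real.exp_pos _).le zero_le_one
            exact Real.exp_le_one_iff.mpr (by simp only [neg_mul]; exact neg_nonpos.mpr (by positivity))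
        _ = 1 := one_mul 1
    calc |Real.sign x * Real.exp (-c * |x|)| * ‖Complex.exp (E x)‖
        ≤ 1 * ‖Complex.exp (E x)‖ :=
          mul_le_mul_of_nonneg_right h1 (by positivity)
      _ = ‖Complex.exp (E x)‖ := by rw [one_mul]
  -- quadratic form of G
  set w : ℂ := Complex.I*((p:ℂ)/(hbar:ℂ)) - ((c*ε : ℝ):ℂ) with hw_def
  obtain ⟨hwre, hwim⟩ := auxWreim hbar c ε p hh.ne'
  set c1 : ℂ := 2*B*(q:ℂ) + Complex.I*((p:ℂ)/(hbar:ℂ)) - ((c*ε : ℝ):ℂ) with hc1_def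
  set d1 : ℂ := -B*(q:ℂ)^2 - Complex.I*((p:ℂ)/(hbar:ℂ))*(q:ℂ) with hd1_def
  have harg1 : ∀ x : ℝ, ((-(c*ε)*x : ℝ) : ℂ) + E x = -B*(x:ℂ)^2 + c1*(x:ℂ) + d1 := by
    intro x
    simp only [hE_def, hc1_def, hd1_def]
    push_cast
    ring
  have hGeq : ∀ x : ℝ, G x = (ε:ℂ) * Complex.exp (-B*(x:ℂ)^2 + c1*(x:ℂ) + d1) := by
    intro x
    simp only [hG_def]
    rw [Complex.ofReal_mul, Complex.ofReal_exp, mul_assoc, ← Complex.exp_add, harg1 x]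
  have hGint : Integrable G := by
    have h := (integrable_cexp_quadratic (b := B) hBpos c1 d1).const_mul (ε:ℂ)
    exact h.congr (Filter.Eventually.of_forall fun x => (hGeq x).symm)
  have hGval : ∫ x : ℝ, G x
      = (ε:ℂ) * (((Real.pi:ℂ) / -(-B)) ^ ((1:ℂ)/2) * Complex.exp (d1 - c1^2/(4*(-B)))) := by
    rw [integral_congr_ae (Filter.Eventually.of_forall hGeq), MeasureTheory.integral_const_mul,
      integral_cexp_quadratic (show (-B).re < 0 by simpa using hBpos) c1 d1]
  have hD : d1 - c1^2/(4*(-B)) = ((-(c*|q|) : ℝ) : ℂ) + w^2 * ((hbar:ℂ)*s)/sb := by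
    have h1 : c1 = 2*B*(q:ℂ) + w := by rw [hc1_def, hw_def]; ring
    have h2 := auxGexp B w (Complex.I*((p:ℂ)/(hbar:ℂ))*(q:ℂ)) (q:ℂ) hB0
    rw [h1, hd1_def, h2]
    have h3 : w^2/(4*B) = w^2 * ((hbar:ℂ)*s)/sb := by
      rw [hB_def]
      exact auxBinv hbar hh0 s sb hs0 hsb0 w
    rw [h3]
    congr 1
    rw [hw_def]
    rw [show |q| = ε * q from hεq.symm]
    push_cast
    ring
  have hReD : (d1 - c1^2/(4*(-B))).re
      = -(c*|q|) + (((-(c*ε))^2 - (p/hbar)^2) * hbar * 1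
          - 2*(-(c*ε))*(p/hbar)*hbar*(s.im*sb.re - s.re*sb.im)) / Complex.normSq sb := by
    rw [hD, Complex.add_re, Complex.ofReal_re, auxWre' w hbar s sb hsb0, hwre, hwim, hnorm']
  have habsG : ‖∫ x : ℝ, G x‖
      = (Real.pi/(‖B‖))^((1:ℝ)/2) * Real.exp ((d1 - c1^2/(4*(-B))).re) := by
    rw [hGval, norm_mul, norm_mul]
    have h1 : ‖(ε:ℂ)‖ = 1 := by rcases hε with h|h <;> rw [h] <;> simp
    rw [h1, one_mul, neg_neg,
      show ((1:ℂ)/2) = (((1:ℝ)/2 : ℝ):ℂ) by norm_num, Complex.norm_cpow_real,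
      norm_div, Complex.norm_real, Real.norm_eq_abs, abs_of_pos Real.pi_pos, Complex.norm_exp]
  -- pointwise bound for the correction term
  have hpt : ∀ x : ℝ, ‖F x - G x‖
      ≤ 2 * Real.exp (-B.re*q^2) * Real.exp (-B.re*x^2 + (-(c*ε))*x) := by
    intro x
    have hfg : F x - G x
        = ((Real.sign x * Real.exp (-c*|x|) - ε * Real.exp (-(c*ε)*x) : ℝ) : ℂ)
          * Complex.exp (E x) := by
      simp only [hF_def, hG_def]
      push_cast
      ring
    rw [hfg, norm_mul, Complex.norm_real, Real.norm_eq_abs, habs_exp x]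
    rcases le_or_gt (ε * x) 0 with hx | hx
    · have hxabs : |x| = -(ε*x) := by
        rcases hε with h | h
        · rw [h] at hx ⊢
          rw [one_mul] at hx ⊢
          exact _root_.abs_of_nonpos hx
        · rw [h] at hx ⊢
          have h0 : 0 ≤ x := by nlinarith
          rw [_root_.abs_of_nonneg h0]; ring
      have hd : |Real.sign x * Real.exp (-c*|x|) - ε * Real.exp (-(c*ε)*x)|
          ≤ 2 * Real.exp (-(c*ε)*x) := by
        have h1 : |Real.sign x * Real.exp (-c*|x|)| ≤ Real.exp (-(c*ε)*x) := by
          rw [abs_mul, abs_of_pos (Real.exp_pos _)]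
          have hle : Real.exp (-c*|x|) ≤ Real.exp (-(c*ε)*x) := by
            apply Real.exp_le_exp.mpr
            rw [hxabs]
            nlinarith [mul_nonneg hc.le (neg_nonneg.mpr hx)]
          calc |Real.sign x| * Real.exp (-c*|x|) ≤ 1 * Real.exp (-c*|x|) :=
                mul_le_mul_of_nonneg_right (hsign_le x) (Real.exp_pos _).le
            _ = Real.exp (-c*|x|) := one_mul _
            _ ≤ Real.exp (-(c*ε)*x) := hle
        have h2 : |ε * Real.exp (-(c*ε)*x)| ≤ Real.exp (-(c*ε)*x) := by
          rw [abs_mul, abs_of_pos (Real.exp_pos _)]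
          have hεabs : |ε| = 1 := by rcases hε with h|h <;> rw [h] <;> norm_num
          rw [hεabs, one_mul]
        calc |Real.sign x * Real.exp (-c*|x|) - ε * Real.exp (-(c*ε)*x)|
            ≤ |Real.sign x * Real.exp (-c*|x|)| + |ε * Real.exp (-(c*ε)*x)| := abs_sub _ _
          _ ≤ Real.exp (-(c*ε)*x) + Real.exp (-(c*ε)*x) := add_le_add h1 h2
          _ = 2 * Real.exp (-(c*ε)*x) := by ring
      have h3 : Real.exp (-B.re*(x-q)^2) ≤ Real.exp (-B.re*q^2 + -B.re*x^2) := by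
        apply Real.exp_le_exp.mpr
        have hxq : x*q ≤ 0 := by
          have hx2 : x * q = (ε*x) * |q| := by nth_rewrite 1 [hqe]; ring
          rw [hx2]
          exact mul_nonpos_of_nonpos_of_nonneg hx (abs_nonneg q)
        nlinarith [hBpos, hxq]
      calc |Real.sign x * Real.exp (-c*|x|) - ε * Real.exp (-(c*ε)*x)|
            * Real.exp (-B.re*(x-q)^2)
          ≤ (2 * Real.exp (-(c*ε)*x)) * Real.exp (-B.re*q^2 + -B.re*x^2) := by
            apply mul_le_mul hd h3 (Real.exp_pos _).le (by positivity)
        _ = 2 * Real.exp ((-(c*ε)*x) + (-B.re*q^2 + -B.re*x^2)) := by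
            rw [mul_assoc, ← Real.exp_add]
        _ = 2 * Real.exp (-B.re*q^2 + (-B.re*x^2 + (-(c*ε))*x)) := by
            congr 1
            ring
        _ = 2 * Real.exp (-B.re*q^2) * Real.exp (-B.re*x^2 + (-(c*ε))*x) := by
            rw [mul_assoc, ← Real.exp_add]
    · have hsx : Real.sign x = ε := by
        rcases hε with h | h
        · rw [h] at hx ⊢
          rw [one_mul] at hx
          exact Real.sign_of_pos hx
        · rw [h] at hx ⊢
          have h0 : x < 0 := by nlinarith
          exact Real.sign_of_neg h0
      have hxabs : |x| = ε * x := by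
        rcases hε with h | h
        · rw [h] at hx ⊢
          rw [one_mul] at hx ⊢
          exact abs_of_pos hx
        · rw [h] at hx ⊢
          have h0 : x < 0 := by nlinarith
          rw [abs_of_neg h0]; ring
      have hzero : Real.sign x * Real.exp (-c*|x|) - ε * Real.exp (-(c*ε)*x) = 0 := by
        rw [hsx, hxabs, show -c*(ε*x) = -(c*ε)*x from by ring]
        ring
      rw [hzero]
      simp only [abs_zero, zero_mul]
      positivity
  -- value of the correction bound
  have hRint : Integrable (fun x : ℝ =>
      2 * Real.exp (-B.re*q^2) * Real.exp (-B.re*x^2 + (-(c*ε))*x)) :=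
    (aux_integrable_exp_quad hBpos (-(c*ε))).const_mul _
  have hcorr : (∫ x : ℝ, ‖F x - G x‖)
      ≤ 2 * Real.exp (-B.re*q^2)
        * ((Real.pi/B.re)^((1:ℝ)/2) * Real.exp ((c*ε)^2/(4*B.re))) := by
    calc (∫ x : ℝ, ‖F x - G x‖)
        ≤ ∫ x : ℝ, 2 * Real.exp (-B.re*q^2) * Real.exp (-B.re*x^2 + (-(c*ε))*x) :=
          integral_mono (hFint.sub hGint).norm hRint hpt
      _ = 2 * Real.exp (-B.re*q^2) * ∫ x : ℝ, Real.exp (-B.re*x^2 + (-(c*ε))*x) :=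
          MeasureTheory.integral_const_mul _ _
      _ = 2 * Real.exp (-B.re*q^2)
          * ((Real.pi/B.re)^((1:ℝ)/2) * Real.exp ((c*ε)^2/(4*B.re))) := by
          rw [aux_integral_exp_quad hBpos (-(c*ε)), neg_sq]
  -- |N|
  have hNabs : ‖N‖
      = ((2*Real.pi*hbar) ^ ((1:ℝ)/4))⁻¹ * (‖s‖ ^ ((1:ℝ)/2))⁻¹ := by
    rw [hN_def, norm_mul, norm_inv, norm_inv, Complex.norm_real, Real.norm_eq_abs,
      abs_of_pos (show (0:ℝ) < (2*Real.pi*hbar) ^ ((1:ℝ)/4) by positivity),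
      show ((1:ℂ)/2) = (((1:ℝ)/2 : ℝ):ℂ) by norm_num, Complex.norm_cpow_real]
  -- splitting
  have hsplit : ‖∫ x : ℝ, F x‖
      ≤ ‖∫ x : ℝ, G x‖ + ∫ x : ℝ, ‖F x - G x‖ := by
    have h1 : (∫ x : ℝ, F x) = (∫ x : ℝ, G x) + ∫ x : ℝ, (F x - G x) := by
      rw [integral_sub hFint hGint]
      ring
    rw [h1]
    refine (norm_add_le _ _).trans ?_
    gcongr
    exact norm_integral_le_integral_norm _
  -- final arithmetic
  have him : (sb * (starRingEnd ℂ) s).im = sb.im*s.re - sb.re*s.im := by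
    simp [Complex.mul_im]
    ring
  have hsqe : (-(c*ε))^2 = c^2 := by rw [neg_sq, mul_pow, hε2, mul_one]
  have hcsq : (c*ε)^2 = c^2 := by rw [mul_pow, hε2, mul_one]
  have hA4 : A^4 = hbar^4/(m^2*β^2) := by
    rw [show A^4 = (A^2)^2 from by ring, hA2, hc2]
  have hNnn : (0:ℝ) ≤ ‖N‖ := norm_nonneg N
  have hBabs_pos : 0 < ‖B‖ := norm_pos_iff.mpr hB0
  have hcoef1 : A * ‖N‖ * (Real.pi/(‖B‖))^((1:ℝ)/2)
      = (8 * Real.pi * hbar ^ 5 / (m ^ 2 * β ^ 2 * ‖sb‖ ^ 2)) ^ ((1 : ℝ) / 4) := by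
    apply aux_eq_of_pow4 ?_ (by positivity)
    swap
    · exact mul_nonneg (mul_nonneg hA.le hNnn)
        (Real.rpow_nonneg (div_nonneg Real.pi_pos.le hBabs_pos.le) _)
    rw [aux_rpow4 (by positivity), hNabs, hBabs]
    rw [show (A * (((2*Real.pi*hbar) ^ ((1:ℝ)/4))⁻¹ * (‖s‖ ^ ((1:ℝ)/2))⁻¹)
          * (Real.pi/(‖sb‖/(4*hbar*‖s‖))) ^ ((1:ℝ)/2))^4
        = A^4 * (((((2*Real.pi*hbar) ^ ((1:ℝ)/4))^4)⁻¹ * (((‖s‖ ^ ((1:ℝ)/2)))^4)⁻¹))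
          * (((Real.pi/(‖sb‖/(4*hbar*‖s‖))) ^ ((1:ℝ)/2))^4) from by ring]
    rw [aux_rpow4 (show (0:ℝ) ≤ 2*Real.pi*hbar by positivity),
      aux_rpow24 (norm_nonneg s),
      aux_rpow24 (show (0:ℝ) ≤ Real.pi/(‖sb‖/(4*hbar*‖s‖)) by positivity),
      hA4]
    exact aux_coef1_id hbar m β (‖s‖) (‖sb‖) hh hm.ne' hβ.ne habss habssb
  have hexp1 : -(c*|q|) + (((-(c*ε))^2 - (p/hbar)^2) * hbar * 1
          - 2*(-(c*ε))*(p/hbar)*hbar*(s.im*sb.re - s.re*sb.im)) / Complex.normSq sb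
      = -(p ^ 2) / (hbar * ‖sb‖ ^ 2)
          - c * (|q| + 2 * Real.sign (q * p) * |p| * (sb * (starRingEnd ℂ) s).im
              / ‖sb‖ ^ 2)
          + hbar ^ 5 / (m ^ 2 * β ^ 2 * ‖sb‖ ^ 2) := by
    rw [him, hsqe, hnsqb]
    rw [show hbar ^ 5 / (m ^ 2 * β ^ 2 * ‖sb‖ ^ 2)
        = hbar * c^2 / ‖sb‖^2 from by
      rw [hc2]; exact aux_h5a hbar m β (‖sb‖) hm.ne' hβ.ne habssb.ne']
    rw [show (2:ℝ) * Real.sign (q*p) * |p| * (sb.im*s.re - sb.re*s.im) / ‖sb‖ ^ 2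
        = 2 * (ε*p) * (sb.im*s.re - sb.re*s.im) / ‖sb‖ ^ 2 from by rw [← hsgnp]; ring]
    exact aux_exp1_id c ε p hbar |q| (‖sb‖) s.re s.im sb.re sb.im hh.ne' habssb.ne' 
  have hE1 : A * ‖N‖ * (‖∫ x : ℝ, G x‖)
      = (8 * Real.pi * hbar ^ 5 / (m ^ 2 * β ^ 2 * ‖sb‖ ^ 2)) ^ ((1 : ℝ) / 4)
          * Real.exp (-(p ^ 2) / (hbar * ‖sb‖ ^ 2)
              - c * (|q| + 2 * Real.sign (q * p) * |p| * (sb * (starRingEnd ℂ) s).im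
                  / ‖sb‖ ^ 2)
              + hbar ^ 5 / (m ^ 2 * β ^ 2 * ‖sb‖ ^ 2)) := by
    rw [habsG, hReD]
    rw [show A * ‖N‖ * ((Real.pi/(‖B‖))^((1:ℝ)/2)
          * Real.exp (-(c*|q|) + (((-(c*ε))^2 - (p/hbar)^2) * hbar * 1
            - 2*(-(c*ε))*(p/hbar)*hbar*(s.im*sb.re - s.re*sb.im)) / Complex.normSq sb))
        = (A * ‖N‖ * (Real.pi/(‖B‖))^((1:ℝ)/2))
          * Real.exp (-(c*|q|) + (((-(c*ε))^2 - (p/hbar)^2) * hbar * 1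
            - 2*(-(c*ε))*(p/hbar)*hbar*(s.im*sb.re - s.re*sb.im)) / Complex.normSq sb)
        from by ring]
    rw [hcoef1, hexp1]
  have hexp2 : (-B.re*q^2) + (c*ε)^2/(4*B.re)
      = -(q ^ 2) / (4 * hbar * ‖s‖ ^ 2)
        + hbar ^ 5 * ‖s‖ ^ 2 / (m ^ 2 * β ^ 2) := by
    rw [hBre, hcsq,
      show hbar ^ 5 * ‖s‖ ^ 2 / (m ^ 2 * β ^ 2)
        = hbar * ‖s‖^2 * c^2 from by
      rw [hc2]; exact aux_h5b hbar m β (‖s‖) hm.ne' hβ.ne]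
    exact aux_exp2_id c q hbar (‖s‖) hh.ne' habss.ne' 
  have hcoef2 : A * ‖N‖ * (2 * (Real.pi/B.re)^((1:ℝ)/2))
      = (128 * Real.pi * hbar ^ 5 * ‖s‖ ^ 2 / (m ^ 2 * β ^ 2)) ^ ((1 : ℝ) / 4) := by
    apply aux_eq_of_pow4 ?_ (by positivity)
    swap
    · exact mul_nonneg (mul_nonneg hA.le hNnn)
        (mul_nonneg (by norm_num)
          (Real.rpow_nonneg (div_nonneg Real.pi_pos.le hBpos.le) _))
    rw [aux_rpow4 (by positivity), hNabs, hBre]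
    rw [show (A * (((2*Real.pi*hbar) ^ ((1:ℝ)/4))⁻¹ * (‖s‖ ^ ((1:ℝ)/2))⁻¹)
          * (2 * (Real.pi/(1 / (4 * hbar * ‖s‖ ^ 2))) ^ ((1:ℝ)/2)))^4
        = A^4 * (((((2*Real.pi*hbar) ^ ((1:ℝ)/4))^4)⁻¹ * (((‖s‖ ^ ((1:ℝ)/2)))^4)⁻¹))
          * (16 * (((Real.pi/(1 / (4 * hbar * ‖s‖ ^ 2))) ^ ((1:ℝ)/2))^4)) from by ring]
    rw [aux_rpow4 (show (0:ℝ) ≤ 2*Real.pi*hbar by positivity),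
      aux_rpow24 (norm_nonneg s),
      aux_rpow24 (show (0:ℝ) ≤ Real.pi/(1 / (4 * hbar * ‖s‖ ^ 2)) by positivity),
      hA4]
    exact aux_coef2_id hbar m β (‖s‖) hh hm.ne' hβ.ne habss
  have hE2 : A * ‖N‖ * (2*Real.exp (-B.re*q^2)
        * ((Real.pi/B.re)^((1:ℝ)/2) * Real.exp ((c*ε)^2/(4*B.re))))
      = (128 * Real.pi * hbar ^ 5 * ‖s‖ ^ 2 / (m ^ 2 * β ^ 2)) ^ ((1 : ℝ) / 4)
          * Real.exp (-(q ^ 2) / (4 * hbar * ‖s‖ ^ 2)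
              + hbar ^ 5 * ‖s‖ ^ 2 / (m ^ 2 * β ^ 2)) := by
    rw [show A * ‖N‖ * (2*Real.exp (-B.re*q^2)
          * ((Real.pi/B.re)^((1:ℝ)/2) * Real.exp ((c*ε)^2/(4*B.re))))
        = (A * ‖N‖ * (2 * (Real.pi/B.re)^((1:ℝ)/2)))
          * (Real.exp (-B.re*q^2) * Real.exp ((c*ε)^2/(4*B.re))) from by ring,
      ← Real.exp_add, hcoef2, hexp2]
  -- conclusion
  rw [key, norm_mul, norm_mul, Complex.norm_real, Real.norm_eq_abs, _root_.abs_of_pos hA]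
  calc A * ‖N‖ * ‖∫ x : ℝ, F x‖
      ≤ A * ‖N‖ * (‖∫ x : ℝ, G x‖ + ∫ x : ℝ, ‖F x - G x‖) :=
        mul_le_mul_of_nonneg_left hsplit (mul_nonneg hA.le (norm_nonneg N))
    _ ≤ A * ‖N‖ * (‖∫ x : ℝ, G x‖
          + 2*Real.exp (-B.re*q^2) * ((Real.pi/B.re)^((1:ℝ)/2) * Real.exp ((c*ε)^2/(4*B.re)))) := by
        apply mul_le_mul_of_nonneg_left _ (mul_nonneg hA.le (norm_nonneg N))
        exact add_le_add_right hcorr _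
    _ = A * ‖N‖ * ‖∫ x : ℝ, G x‖
        + A * ‖N‖ * (2*Real.exp (-B.re*q^2)
            * ((Real.pi/B.re)^((1:ℝ)/2) * Real.exp ((c*ε)^2/(4*B.re)))) := by ring
    _ = _ := by rw [hE1, hE2]
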